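/- If V : Γ⁺ → B(H) is a partial-isometric representation of the positive cone Γ⁺ of a totally ordered abelian group Γ (i.e. each V_x is a partial isometry and V_{x+y} = V_x V_y), then for all x, t ∈ Γ⁺ the final projections V_x V_x* and V_t V_t* commute, and likewise the initial projections V_x* V_x and V_t* V_t commute. -/

import Mathlib

/-- If `V : Γ⁺ → B(H)` is a partial-isometric representation of the positive cone of a
totally ordered abelian group `Γ` (each `V x` with `0 ≤ x` is a partial isometry and
`V (x+y) = V x * V y` for `x, y ≥ 0`), then the final projections `V x (V x)*` commute
with each other, and likewise the initial projections `(V x)* (V x)` commute. -/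
theorem partial_isometric_representation_projections_commute
    {Γ : Type*} [AddCommGroup Γ] [LinearOrder Γ] [IsOrderedAddMonoid Γ]
    {H : Type*} [NormedAddCommGroup H] [InnerProductSpace ℂ H] [CompleteSpace H]
    (V : Γ → H →L[ℂ] H)
    (hpiso : ∀ x : Γ, 0 ≤ x → V x * star (V x) * V x = V x)
    (hmul : ∀ x y : Γ, 0 ≤ x → 0 ≤ y → V (x + y) = V x * V y) :
    ∀ x t : Γ, 0 ≤ x → 0 ≤ t →
      Commute (V x * star (V x)) (V t * star (V t)) ∧
      Commute (star (V x) * V x) (star (V t) * V t) := by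
  have key : ∀ (a b c : H →L[ℂ] H), a * b * a = a → a * (b * (a * c)) = a * c := by
    intro a b c h
    rw [← mul_assoc, ← mul_assoc, h]
  have main : ∀ x t : Γ, 0 ≤ x → 0 ≤ t → x ≤ t →
      Commute (V x * star (V x)) (V t * star (V t)) ∧
      Commute (star (V x) * V x) (star (V t) * V t) := by
    intro x t hx ht hxt
    set s := t - x with hsdef
    have hs0 : 0 ≤ s := sub_nonneg.mpr hxt
    have hts : t = x + s := by rw [hsdef]; abel
    have hV1 : V t = V x * V s := by rw [hts, hmul x s hx hs0]
    have hV2 : V t = V s * V x := by rw [hts, add_comm, hmul s x hs0 hx]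
    have hp := hpiso x hx
    have hq : star (V x) * (V x * star (V x)) = star (V x) := by
      have := congrArg star hp
      simpa [star_mul, mul_assoc] using this
    have hq' : star (V x) * V x * star (V x) = star (V x) := by
      rw [mul_assoc]; exact hq
    have hp' : V x * (star (V x) * V x) = V x := by
      rw [← mul_assoc]; exact hp
    constructor
    · have e1 : (V x * star (V x)) * (V t * star (V t)) = V t * star (V t) := by
        rw [hV1]
        simp only [star_mul, mul_assoc]
        exact key _ _ _ hp
      have e2 : (V t * star (V t)) * (V x * star (V x)) = V t * star (V t) := by
        rw [hV1]
        simp only [star_mul, mul_assoc]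
        rw [hq]
      exact e1.trans e2.symm
    · have e1 : (star (V x) * V x) * (star (V t) * V t) = star (V t) * V t := by
        rw [hV2]
        simp only [star_mul, mul_assoc]
        exact key _ _ _ hq'
      have e2 : (star (V t) * V t) * (star (V x) * V x) = star (V t) * V t := by
        rw [hV2]
        simp only [star_mul, mul_assoc]
        rw [hp']
      exact e1.trans e2.symm
  intro x t hx ht
  rcases le_total x t with h | h
  · exact main x t hx ht h
  · obtain ⟨h1, h2⟩ := main t x ht hx h
    exact ⟨h1.symm, h2.symm⟩
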